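/- Let H be a real Hilbert space, T : H → H nonexpansive, (β_n), (λ_n) ⊂ (0,1], x₀ ∈ H, and let (x_n) be generated by the (T-KM) iteration. Let N ∈ ℕ∖{0} satisfy N ≥ max{‖x₀ − p‖, ‖p‖} for some p ∈ Fix T, let ℓ ∈ ℕ∖{0} and let b, D, B, L : ℕ → ℕ be monotone functions satisfying (Q2)–(Q6). Then for every k ∈ ℕ and every monotone f : ℕ → ℕ there exist n ≤ ψ(k,f) and x ∈ B_{2N} such that ‖T(x) − x‖ ≤ 1/(f(n)+1) and ⟪x, x − x_m⟫ ≤ 1/(k+1) for all m ≥ n; here ψ(k,f) := ν₂(48N(ǧ^{(R)}(0)+1)²), where g(m) := f(ν₂(m)), R := 64N⁴(k+1)², ǧ(m) := max{g(48N(m+1)²), 48N(m+1)²}, ǧ^{(R)} is the R-fold composition of ǧ, ν₂(k) := max{b(4Nℓ(k+1)−1), ν₁(2ℓ(k+1)−1)}, ν₁(k) := D(G(3k+2) + ⌈ln(6N(k+1))⌉) + 1 and G(k) := max{B(4N(k+1)−1), L(10N(k+1)−1)}. -/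

import Mathlib

/-- `G(k) := max{B(4N(k+1)−1), L(10N(k+1)−1)}`. -/
def Gfun (N : ℕ) (B L : ℕ → ℕ) (k : ℕ) : ℕ :=
  max (B (4 * N * (k + 1) - 1)) (L (10 * N * (k + 1) - 1))

/-- `ν₁(k) := D(G(3k+2) + ⌈ln(6N(k+1))⌉) + 1`. -/
noncomputable def nu1 (N : ℕ) (D B L : ℕ → ℕ) (k : ℕ) : ℕ :=
  D (Gfun N B L (3 * k + 2) + Nat.ceil (Real.log (6 * (N : ℝ) * (k + 1)))) + 1


/-- `ν₂(k) := max{b(4Nℓ(k+1)−1), ν₁(2ℓ(k+1)−1)}`. -/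
noncomputable def nu2 (N l : ℕ) (b D B L : ℕ → ℕ) (k : ℕ) : ℕ :=
  max (b (4 * N * l * (k + 1) - 1)) (nu1 N D B L (2 * l * (k + 1) - 1))

/-- `ǧ(m) := max{f(ν₂(48N(m+1)²)), 48N(m+1)²}` (i.e. `ǧ` for `g(m) := f(ν₂(m))`). -/
noncomputable def gcheckKM (N l : ℕ) (b D B L : ℕ → ℕ) (f : ℕ → ℕ) (m : ℕ) : ℕ :=
  max (f (nu2 N l b D B L (48 * N * (m + 1) ^ 2))) (48 * N * (m + 1) ^ 2)

/-- `ψ(k,f) := ν₂(48N(ǧ^{(R)}(0)+1)²)` with `R := 64N⁴(k+1)²`. -/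
noncomputable def psiKM (N l : ℕ) (b D B L : ℕ → ℕ) (k : ℕ) (f : ℕ → ℕ) : ℕ :=
  nu2 N l b D B L
    (48 * N * ((gcheckKM N l b D B L f)^[64 * N ^ 4 * (k + 1) ^ 2] 0 + 1) ^ 2)



lemma hull_approx_fixed {H : Type*} [NormedAddCommGroup H] [InnerProductSpace ℝ H]
    (T : H → H) (hT : ∀ a b : H, ‖T a - T b‖ ≤ ‖a - b‖)
    (S : Set H) (p : H) (Rr ε : ℝ) (hε : 0 ≤ ε) (hRr : 0 ≤ Rr)
    (hS : ∀ z ∈ S, ‖T z - z‖ ≤ ε) (hSb : S ⊆ Metric.closedBall p Rr) :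
    ∀ w ∈ convexHull ℝ S, ‖T w - w‖^2 ≤ 4*Rr*ε + ε^2 := by
  intro w hw
  have hwball : w ∈ Metric.closedBall p Rr :=
    convexHull_min hSb (convex_closedBall p Rr) hw
  rw [convexHull_eq] at hw
  obtain ⟨ι, t, wt, z, hw0, hw1, hzS, hcm⟩ := hw
  have hcm' : ∑ i ∈ t, wt i • z i = w := by
    rw [← hcm, Finset.centerMass_eq_of_sum_1 _ _ hw1]
  have expand : ∀ v : H, ∑ i ∈ t, wt i * ‖v - z i‖^2
      = ‖v‖^2 - 2 * (inner ℝ v w : ℝ) + ∑ i ∈ t, wt i * ‖z i‖^2 := by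
    intro v
    have h2 : ∑ i ∈ t, wt i * (inner ℝ v (z i) : ℝ) = (inner ℝ v w : ℝ) := by
      rw [← hcm', inner_sum]
      exact Finset.sum_congr rfl fun i _ => (real_inner_smul_right v (z i) (wt i)).symm
    have h1 : ∀ i ∈ t, wt i * ‖v - z i‖^2
        = wt i * ‖v‖^2 - 2 * (wt i * (inner ℝ v (z i) : ℝ)) + wt i * ‖z i‖^2 := by
      intro i _
      have : ‖v - z i‖^2 = ‖v‖^2 - 2 * (inner ℝ v (z i) : ℝ) + ‖z i‖^2 := by
        rw [@norm_sub_sq_real]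
      rw [this]; ring
    rw [Finset.sum_congr rfl h1, Finset.sum_add_distrib, Finset.sum_sub_distrib,
      ← Finset.sum_mul, hw1, one_mul, ← Finset.mul_sum]
    rw [h2]
  have key : ‖T w - w‖^2
      = ∑ i ∈ t, (wt i * ‖T w - z i‖^2 - wt i * ‖w - z i‖^2) := by
    rw [Finset.sum_sub_distrib, expand (T w)]
    rw [expand w]
    have hww : (inner ℝ w w : ℝ) = ‖w‖^2 := real_inner_self_eq_norm_sq w
    have : ‖T w - w‖^2 = ‖T w‖^2 - 2*(inner ℝ (T w) w : ℝ) + ‖w‖^2 := by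
      rw [@norm_sub_sq_real]
    rw [this, hww]; ring
  have hbound : ∀ i ∈ t, wt i * ‖T w - z i‖^2 - wt i * ‖w - z i‖^2 ≤ wt i * (4*Rr*ε + ε^2) := by
    intro i hi
    have hzi := hzS i hi
    have hball := hSb hzi
    have h1 : ‖T w - z i‖ ≤ ‖w - z i‖ + ε := by
      have htri := dist_triangle (T w) (T (z i)) (z i)
      simp only [dist_eq_norm] at htri
      have := hT w (z i)
      have := hS (z i) hzi
      linarith
    have h2 : ‖w - z i‖ ≤ 2*Rr := by
      have ha : dist w p ≤ Rr := Metric.mem_closedBall.mp hwball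
      have hb : dist (z i) p ≤ Rr := Metric.mem_closedBall.mp hball
      have := dist_triangle w p (z i)
      have hc : dist p (z i) = dist (z i) p := dist_comm _ _
      have : dist w (z i) ≤ 2*Rr := by linarith
      simpa [dist_eq_norm] using this
    have h3 : ‖T w - z i‖^2 ≤ (‖w - z i‖ + ε)^2 := by
      have := norm_nonneg (T w - z i)
      nlinarith
    have h4 : ‖T w - z i‖^2 - ‖w - z i‖^2 ≤ 4*Rr*ε + ε^2 := by
      have := norm_nonneg (w - z i)
      nlinarith
    have hwti := hw0 i hi
    nlinarith
  calc ‖T w - w‖^2 = _ := key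
    _ ≤ ∑ i ∈ t, wt i * (4*Rr*ε + ε^2) := Finset.sum_le_sum hbound
    _ = 4*Rr*ε + ε^2 := by rw [← Finset.sum_mul, hw1, one_mul]

lemma window_sum (F : ℕ → ℝ) (hF : ∀ i, 0 ≤ F i) (c : ℝ) (W : ℕ)
    (hW : ∀ m : ℕ, ∑ i ∈ Finset.Icc (W + 1) (W + m), F i ≤ c)
    (s n : ℕ) (hWs : W ≤ s) (hsn : s ≤ n) :
    ∑ i ∈ Finset.Ioc s n, F i ≤ c := by
  have hWn : W ≤ n := le_trans hWs hsn
  have h := hW (n - W)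
  rw [Nat.add_sub_cancel' hWn] at h
  rw [Finset.Icc_add_one_left_eq_Ioc] at h
  refine le_trans ?_ h
  exact Finset.sum_le_sum_of_subset_of_nonneg (Finset.Ioc_subset_Ioc_left hWs)
    (fun i _ _ => hF i)

set_option maxHeartbeats 4000000 in
/-- quantitative version of `limsup ⟨x̃, x̃ − x_n⟩ ≤ 0`,
avoiding sequential weak compactness. -/
theorem tkm_quantitative_limsup
    {H : Type*} [NormedAddCommGroup H] [InnerProductSpace ℝ H] [CompleteSpace H]
    (T : H → H) (hT : ∀ a b : H, ‖T a - T b‖ ≤ ‖a - b‖)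
    (β lam : ℕ → ℝ)
    (hβ : ∀ n, β n ∈ Set.Ioc (0 : ℝ) 1)
    (hlam : ∀ n, lam n ∈ Set.Ioc (0 : ℝ) 1)
    (x : ℕ → H)
    (hx : ∀ n, x (n + 1) = β n • x n + lam n • (T (β n • x n) - β n • x n))
    (N : ℕ) (hN : 0 < N)
    (p : H) (hp : T p = p)
    (hNp : max ‖x 0 - p‖ ‖p‖ ≤ (N : ℝ))
    (l : ℕ) (hl : 0 < l)
    (b D B L : ℕ → ℕ)
    (hbmono : Monotone b) (hDmono : Monotone D) (hBmono : Monotone B) (hLmono : Monotone L)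
    (hQ2 : ∀ k n : ℕ, b k ≤ n → |1 - β n| ≤ 1 / (k + 1))
    (hQ5 : ∀ n : ℕ, 1 / (l : ℝ) ≤ lam n)
    (hQ3 : ∀ k : ℕ, (k : ℝ) ≤ ∑ i ∈ Finset.Icc 1 (D k), (1 - β i))
    (hQ4 : ∀ k n : ℕ, ∑ i ∈ Finset.Icc (B k + 1) (B k + n), |β i - β (i - 1)| ≤ 1 / (k + 1))
    (hQ6 : ∀ k n : ℕ, ∑ i ∈ Finset.Icc (L k + 1) (L k + n), |lam i - lam (i - 1)| ≤ 1 / (k + 1)) :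
    ∀ k : ℕ, ∀ f : ℕ → ℕ, Monotone f →
      ∃ n ≤ psiKM N l b D B L k f, ∃ y : H, ‖y - p‖ ≤ 2 * N ∧
        ‖T y - y‖ ≤ 1 / (f n + 1) ∧
        ∀ m : ℕ, n ≤ m → (inner ℝ y (y - x m) : ℝ) ≤ 1 / (k + 1) := by
  intro k f hf
  have hN1 : (1:ℝ) ≤ N := by exact_mod_cast hN
  have hl1 : (1:ℝ) ≤ l := by exact_mod_cast hl
  have hx0p : ‖x 0 - p‖ ≤ N := le_trans (le_max_left _ _) hNp
  have hpN : ‖p‖ ≤ N := le_trans (le_max_right _ _) hNp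
  -- boundedness of the iteration
  have hub : ∀ n, ‖x n - p‖ ≤ N → ‖β n • x n - p‖ ≤ N := by
    intro n hn
    have hbe := hβ n
    have hdec : β n • x n - p = β n • (x n - p) + (β n - 1) • p := by module
    rw [hdec]
    calc ‖β n • (x n - p) + (β n - 1) • p‖
        ≤ ‖β n • (x n - p)‖ + ‖(β n - 1) • p‖ := norm_add_le _ _
      _ = β n * ‖x n - p‖ + (1 - β n) * ‖p‖ := by
          rw [norm_smul, norm_smul, Real.norm_eq_abs, Real.norm_eq_abs,
            abs_of_pos hbe.1, abs_of_nonpos (by linarith [hbe.2])]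
          ring
      _ ≤ β n * N + (1 - β n) * N := by
          have h1 : 0 ≤ β n := le_of_lt hbe.1
          have h2 : (0:ℝ) ≤ 1 - β n := by linarith [hbe.2]
          have h3 : ‖p‖ ≤ (N:ℝ) := hpN
          have := mul_le_mul_of_nonneg_left hn h1
          have := mul_le_mul_of_nonneg_left h3 h2
          linarith
      _ = N := by ring
  have hxp : ∀ n, ‖x n - p‖ ≤ N := by
    intro n
    induction n with
    | zero => exact hx0p
    | succ n ih =>
      have hle := hlam n
      have hu := hub n ih
      have hdec : x (n+1) - p
          = (1 - lam n) • (β n • x n - p) + lam n • (T (β n • x n) - p) := by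
        rw [hx n]; module
      rw [hdec]
      have hTp : ‖T (β n • x n) - p‖ ≤ ‖β n • x n - p‖ := by
        have := hT (β n • x n) p; rwa [hp] at this
      calc ‖(1 - lam n) • (β n • x n - p) + lam n • (T (β n • x n) - p)‖
          ≤ ‖(1 - lam n) • (β n • x n - p)‖ + ‖lam n • (T (β n • x n) - p)‖ := norm_add_le _ _
        _ = (1 - lam n) * ‖β n • x n - p‖ + lam n * ‖T (β n • x n) - p‖ := by
            rw [norm_smul, norm_smul, Real.norm_eq_abs, Real.norm_eq_abs,
              abs_of_nonneg (by linarith [hle.2] : (0:ℝ) ≤ 1 - lam n), abs_of_pos hle.1]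
        _ ≤ (1 - lam n) * N + lam n * N := by
            have h2 : (0:ℝ) ≤ 1 - lam n := by linarith [hle.2]
            have := mul_le_mul_of_nonneg_left hu h2
            have := mul_le_mul_of_nonneg_left (le_trans hTp hu) (le_of_lt hle.1)
            linarith
        _ = N := by ring
  have hxn : ∀ n, ‖x n‖ ≤ 2*N := by
    intro n
    have : ‖x n‖ ≤ ‖x n - p‖ + ‖p‖ := by
      have := norm_add_le (x n - p) p; simpa using this
    linarith [hxp n, hpN]
  have hTu : ∀ n, ‖T (β n • x n)‖ ≤ 2*N := by
    intro n
    have h1 : ‖T (β n • x n) - p‖ ≤ ‖β n • x n - p‖ := by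
      have := hT (β n • x n) p; rwa [hp] at this
    have h2 : ‖T (β n • x n)‖ ≤ ‖T (β n • x n) - p‖ + ‖p‖ := by
      have := norm_add_le (T (β n • x n) - p) p; simpa using this
    linarith [hub n (hxp n), hpN]
  -- the step recurrence
  have hrec : ∀ n, ‖x (n+2) - x (n+1)‖
      ≤ β (n+1) * ‖x (n+1) - x n‖
        + 6*N*(|β (n+1) - β n| + |lam (n+1) - lam n|) := by
    intro n
    have hb0 := hβ n; have hb1 := hβ (n+1); have hl0 := hlam n; have hl1' := hlam (n+1)
    have decomp : x (n+2) - x (n+1)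
        = ((1 - lam (n+1)) • (β (n+1) • x (n+1) - β (n+1) • x n)
            + lam (n+1) • (T (β (n+1) • x (n+1)) - T (β (n+1) • x n)))
          + (((β (n+1) - β n) • x n
            - (lam (n+1) * β (n+1) - lam n * β n) • x n)
            + ((lam (n+1) - lam n) • T (β n • x n)
            + lam (n+1) • (T (β (n+1) • x n) - T (β n • x n)))) := by
      rw [show n+2 = (n+1)+1 from rfl, hx (n+1), hx n]; module
    have hA : ‖(1 - lam (n+1)) • (β (n+1) • x (n+1) - β (n+1) • x n)
        + lam (n+1) • (T (β (n+1) • x (n+1)) - T (β (n+1) • x n))‖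
        ≤ β (n+1) * ‖x (n+1) - x n‖ := by
      have hsub : β (n+1) • x (n+1) - β (n+1) • x n = β (n+1) • (x (n+1) - x n) :=
        (smul_sub _ _ _).symm
      have e1 : ‖(1 - lam (n+1)) • (β (n+1) • x (n+1) - β (n+1) • x n)‖
          = (1 - lam (n+1)) * (β (n+1) * ‖x (n+1) - x n‖) := by
        rw [hsub, norm_smul, norm_smul, Real.norm_eq_abs, Real.norm_eq_abs,
          abs_of_nonneg (by linarith [hl1'.2] : (0:ℝ) ≤ 1 - lam (n+1)),
          abs_of_pos hb1.1]
      have e2 : ‖lam (n+1) • (T (β (n+1) • x (n+1)) - T (β (n+1) • x n))‖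
          ≤ lam (n+1) * (β (n+1) * ‖x (n+1) - x n‖) := by
        rw [norm_smul, Real.norm_eq_abs, abs_of_pos hl1'.1]
        refine mul_le_mul_of_nonneg_left ?_ (le_of_lt hl1'.1)
        calc ‖T (β (n+1) • x (n+1)) - T (β (n+1) • x n)‖
            ≤ ‖β (n+1) • x (n+1) - β (n+1) • x n‖ := hT _ _
          _ = β (n+1) * ‖x (n+1) - x n‖ := by
              rw [hsub, norm_smul, Real.norm_eq_abs, abs_of_pos hb1.1]
      calc ‖(1 - lam (n+1)) • (β (n+1) • x (n+1) - β (n+1) • x n)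
          + lam (n+1) • (T (β (n+1) • x (n+1)) - T (β (n+1) • x n))‖
          ≤ ‖(1 - lam (n+1)) • (β (n+1) • x (n+1) - β (n+1) • x n)‖
            + ‖lam (n+1) • (T (β (n+1) • x (n+1)) - T (β (n+1) • x n))‖ := norm_add_le _ _
        _ ≤ (1 - lam (n+1)) * (β (n+1) * ‖x (n+1) - x n‖)
            + lam (n+1) * (β (n+1) * ‖x (n+1) - x n‖) := by rw [e1]; linarith
        _ = β (n+1) * ‖x (n+1) - x n‖ := by ring
    have hB1 : ‖(β (n+1) - β n) • x n‖ ≤ |β (n+1) - β n| * (2*N) := by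
      rw [norm_smul, Real.norm_eq_abs]
      exact mul_le_mul_of_nonneg_left (hxn n) (abs_nonneg _)
    have hB2 : ‖(lam (n+1) * β (n+1) - lam n * β n) • x n‖
        ≤ (|β (n+1) - β n| + |lam (n+1) - lam n|) * (2*N) := by
      rw [norm_smul, Real.norm_eq_abs]
      have habs : |lam (n+1) * β (n+1) - lam n * β n|
          ≤ |β (n+1) - β n| + |lam (n+1) - lam n| := by
        have hid : lam (n+1) * β (n+1) - lam n * β n
            = lam (n+1) * (β (n+1) - β n) + β n * (lam (n+1) - lam n) := by ring
        rw [hid]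
        calc |lam (n+1) * (β (n+1) - β n) + β n * (lam (n+1) - lam n)|
            ≤ |lam (n+1) * (β (n+1) - β n)| + |β n * (lam (n+1) - lam n)| := abs_add_le _ _
          _ = |lam (n+1)| * |β (n+1) - β n| + |β n| * |lam (n+1) - lam n| := by
              rw [abs_mul, abs_mul]
          _ ≤ 1 * |β (n+1) - β n| + 1 * |lam (n+1) - lam n| := by
              have h1 : |lam (n+1)| ≤ 1 := abs_le.mpr ⟨by linarith [hl1'.1], hl1'.2⟩
              have h2 : |β n| ≤ 1 := abs_le.mpr ⟨by linarith [hb0.1], hb0.2⟩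
              have := mul_le_mul_of_nonneg_right h1 (abs_nonneg (β (n+1) - β n))
              have := mul_le_mul_of_nonneg_right h2 (abs_nonneg (lam (n+1) - lam n))
              linarith
          _ = |β (n+1) - β n| + |lam (n+1) - lam n| := by ring
      have := mul_le_mul_of_nonneg_right habs (le_trans (norm_nonneg (x n)) (le_refl _))
      calc |lam (n+1) * β (n+1) - lam n * β n| * ‖x n‖
          ≤ (|β (n+1) - β n| + |lam (n+1) - lam n|) * ‖x n‖ :=
            mul_le_mul_of_nonneg_right habs (norm_nonneg _)
        _ ≤ (|β (n+1) - β n| + |lam (n+1) - lam n|) * (2*N) :=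
            mul_le_mul_of_nonneg_left (hxn n) (by positivity)
    have hB3 : ‖(lam (n+1) - lam n) • T (β n • x n)‖ ≤ |lam (n+1) - lam n| * (2*N) := by
      rw [norm_smul, Real.norm_eq_abs]
      exact mul_le_mul_of_nonneg_left (hTu n) (abs_nonneg _)
    have hB4 : ‖lam (n+1) • (T (β (n+1) • x n) - T (β n • x n))‖
        ≤ |β (n+1) - β n| * (2*N) := by
      rw [norm_smul, Real.norm_eq_abs, abs_of_pos hl1'.1]
      have h1 : ‖T (β (n+1) • x n) - T (β n • x n)‖ ≤ |β (n+1) - β n| * ‖x n‖ := by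
        calc ‖T (β (n+1) • x n) - T (β n • x n)‖ ≤ ‖β (n+1) • x n - β n • x n‖ := hT _ _
          _ = |β (n+1) - β n| * ‖x n‖ := by
              rw [← sub_smul, norm_smul, Real.norm_eq_abs]
      have h2 : |β (n+1) - β n| * ‖x n‖ ≤ |β (n+1) - β n| * (2*N) :=
        mul_le_mul_of_nonneg_left (hxn n) (abs_nonneg _)
      have h3 : lam (n+1) * ‖T (β (n+1) • x n) - T (β n • x n)‖
          ≤ 1 * (|β (n+1) - β n| * (2*N)) := by
        apply mul_le_mul hl1'.2 (le_trans h1 h2) (norm_nonneg _) (by norm_num)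
      linarith
    rw [decomp]
    have htri : ‖((1 - lam (n+1)) • (β (n+1) • x (n+1) - β (n+1) • x n)
            + lam (n+1) • (T (β (n+1) • x (n+1)) - T (β (n+1) • x n)))
          + (((β (n+1) - β n) • x n
            - (lam (n+1) * β (n+1) - lam n * β n) • x n)
            + ((lam (n+1) - lam n) • T (β n • x n)
            + lam (n+1) • (T (β (n+1) • x n) - T (β n • x n))))‖
        ≤ ‖(1 - lam (n+1)) • (β (n+1) • x (n+1) - β (n+1) • x n)
            + lam (n+1) • (T (β (n+1) • x (n+1)) - T (β (n+1) • x n))‖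
          + (‖(β (n+1) - β n) • x n‖
            + ‖(lam (n+1) * β (n+1) - lam n * β n) • x n‖
            + (‖(lam (n+1) - lam n) • T (β n • x n)‖
            + ‖lam (n+1) • (T (β (n+1) • x n) - T (β n • x n))‖)) := by
      have t1 := norm_add_le ((1 - lam (n+1)) • (β (n+1) • x (n+1) - β (n+1) • x n)
            + lam (n+1) • (T (β (n+1) • x (n+1)) - T (β (n+1) • x n)))
          (((β (n+1) - β n) • x n - (lam (n+1) * β (n+1) - lam n * β n) • x n)
            + ((lam (n+1) - lam n) • T (β n • x n)
            + lam (n+1) • (T (β (n+1) • x n) - T (β n • x n))))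
      have t2 := norm_add_le ((β (n+1) - β n) • x n
            - (lam (n+1) * β (n+1) - lam n * β n) • x n)
          ((lam (n+1) - lam n) • T (β n • x n)
            + lam (n+1) • (T (β (n+1) • x n) - T (β n • x n)))
      have t3 := norm_sub_le ((β (n+1) - β n) • x n)
          ((lam (n+1) * β (n+1) - lam n * β n) • x n)
      have t4 := norm_add_le ((lam (n+1) - lam n) • T (β n • x n))
          (lam (n+1) • (T (β (n+1) • x n) - T (β n • x n)))
      linarith
    have hNn : (0:ℝ) ≤ N := by linarith
    calc _ ≤ _ := htri
      _ ≤ β (n+1) * ‖x (n+1) - x n‖ + 6*N*(|β (n+1) - β n| + |lam (n+1) - lam n|) := by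
        have := abs_nonneg (β (n+1) - β n)
        have := abs_nonneg (lam (n+1) - lam n)
        nlinarith [hA, hB1, hB2, hB3, hB4]
    -- Gronwall-type unfolding
  have hunfold : ∀ s n : ℕ, s ≤ n →
      ‖x (n+1) - x n‖ ≤ (∏ i ∈ Finset.Ioc s n, β i) * ‖x (s+1) - x s‖
        + ∑ i ∈ Finset.Ioc s n, 6*N*(|β i - β (i-1)| + |lam i - lam (i-1)|) := by
    intro s n
    induction n with
    | zero =>
      intro hs
      have : s = 0 := Nat.le_zero.mp hs
      subst this
      simp
    | succ n ih =>
      intro hs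
      rcases Nat.lt_or_ge s (n+1) with h | h
      · have hsn : s ≤ n := Nat.lt_succ_iff.mp h
        have ihn := ih hsn
        have hstep := hrec n
        rw [Finset.prod_Ioc_succ_top hsn, Finset.sum_Ioc_succ_top hsn]
        have hb1 := hβ (n+1)
        have hprod0 : (0:ℝ) ≤ ∏ i ∈ Finset.Ioc s n, β i :=
          Finset.prod_nonneg fun i _ => le_of_lt (hβ i).1
        have hsum0 : (0:ℝ) ≤ ∑ i ∈ Finset.Ioc s n, 6*N*(|β i - β (i-1)| + |lam i - lam (i-1)|) :=
          Finset.sum_nonneg fun i _ => by positivity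
        have has0 : (0:ℝ) ≤ ‖x (s+1) - x s‖ := norm_nonneg _
        have hred : (n+1-1 : ℕ) = n := rfl
        rw [hred]
        nlinarith [mul_le_mul_of_nonneg_left ihn (le_of_lt hb1.1), hb1.1, hb1.2,
          mul_le_mul_of_nonneg_right hb1.2 hsum0]
      · have : s = n+1 := le_antisymm hs h
        subst this
        simp
  -- D k ≥ k
  have hDge : ∀ m : ℕ, m ≤ D m := by
    intro m
    have h3 := hQ3 m
    have hcard : ∑ i ∈ Finset.Icc 1 (D m), (1 - β i) ≤ (D m : ℝ) := by
      calc ∑ i ∈ Finset.Icc 1 (D m), (1 - β i) ≤ ∑ _i ∈ Finset.Icc 1 (D m), (1:ℝ) :=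
            Finset.sum_le_sum fun i _ => by linarith [(hβ i).1]
        _ = (D m : ℝ) := by simp [Nat.card_Icc]
    exact_mod_cast le_trans h3 hcard
  -- rate for consecutive differences
  have hdx : ∀ kk n : ℕ, nu1 N D B L kk ≤ n → ‖x (n+1) - x n‖ ≤ 3/(2*((kk:ℝ)+1)) := by
    intro kk n hn
    have hkk1 : (0:ℝ) < (kk:ℝ)+1 := by positivity
    obtain ⟨s, Cc, hsdef, hCclog, hnu1⟩ :
        ∃ s Cc : ℕ, s = Gfun N B L (3*kk+2)
          ∧ Real.log (6*(N:ℝ)*((kk:ℝ)+1)) ≤ (Cc:ℝ)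
          ∧ nu1 N D B L kk = D (s + Cc) + 1 := by
      refine ⟨Gfun N B L (3*kk+2), Nat.ceil (Real.log (6 * (N:ℝ) * ((kk:ℝ)+1))), rfl,
        Nat.le_ceil _, rfl⟩
    have hnD : D (s + Cc) < n := by omega
    have hsn : s ≤ n := by have := hDge (s + Cc); omega
    have hmain := hunfold s n hsn
    -- product bound
    have hprod : (∏ i ∈ Finset.Ioc s n, β i) ≤ 1/(6*(N:ℝ)*((kk:ℝ)+1)) := by
      have hpos : (0:ℝ) < 6*(N:ℝ)*((kk:ℝ)+1) := by positivity
      have h1 : (∏ i ∈ Finset.Ioc s n, β i)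
          ≤ Real.exp (-∑ i ∈ Finset.Ioc s n, (1 - β i)) := by
        calc (∏ i ∈ Finset.Ioc s n, β i) ≤ ∏ i ∈ Finset.Ioc s n, Real.exp (-(1 - β i)) := by
              apply Finset.prod_le_prod (fun i _ => le_of_lt (hβ i).1)
              intro i _
              have := Real.add_one_le_exp (-(1 - β i))
              linarith
          _ = Real.exp (∑ i ∈ Finset.Ioc s n, -(1 - β i)) := (Real.exp_sum _ _).symm
          _ = Real.exp (-∑ i ∈ Finset.Ioc s n, (1 - β i)) := by rw [Finset.sum_neg_distrib]
      have h2 : Real.log (6*(N:ℝ)*((kk:ℝ)+1)) ≤ ∑ i ∈ Finset.Ioc s n, (1 - β i) := by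
        have hsplit : (∑ i ∈ Finset.Ioc 0 s, (1 - β i)) + (∑ i ∈ Finset.Ioc s n, (1 - β i))
            = ∑ i ∈ Finset.Ioc 0 n, (1 - β i) :=
          Finset.sum_Ioc_consecutive _ (Nat.zero_le s) hsn
        have hC1 : ((s:ℝ) + (Cc:ℝ)) ≤ ∑ i ∈ Finset.Ioc 0 n, (1 - β i) := by
          have hsub : Finset.Ioc 0 (D (s + Cc)) ⊆ Finset.Ioc 0 n :=
            Finset.Ioc_subset_Ioc_right (le_of_lt hnD)
          have h4 : ∑ i ∈ Finset.Ioc 0 (D (s+Cc)), (1 - β i)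
              ≤ ∑ i ∈ Finset.Ioc 0 n, (1 - β i) :=
            Finset.sum_le_sum_of_subset_of_nonneg hsub
              (fun i _ _ => by linarith [(hβ i).2])
          have h5 := hQ3 (s + Cc)
          rw [show Finset.Icc 1 (D (s+Cc)) = Finset.Ioc 0 (D (s+Cc)) from
            Finset.Icc_add_one_left_eq_Ioc 0 _] at h5
          have hc : ((s + Cc : ℕ) : ℝ) = (s:ℝ) + (Cc:ℝ) := by push_cast; ring
          rw [hc] at h5
          linarith
        have hC2 : (∑ i ∈ Finset.Ioc 0 s, (1 - β i)) ≤ (s:ℝ) := by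
          calc (∑ i ∈ Finset.Ioc 0 s, (1 - β i)) ≤ ∑ _i ∈ Finset.Ioc 0 s, (1:ℝ) :=
                Finset.sum_le_sum fun i _ => by linarith [(hβ i).1]
            _ = (s:ℝ) := by simp
        linarith
      calc (∏ i ∈ Finset.Ioc s n, β i) ≤ Real.exp (-∑ i ∈ Finset.Ioc s n, (1 - β i)) := h1
        _ ≤ Real.exp (-Real.log (6*(N:ℝ)*((kk:ℝ)+1))) := by
            apply Real.exp_le_exp.mpr; linarith
        _ = 1/(6*(N:ℝ)*((kk:ℝ)+1)) := by
            rw [Real.exp_neg, Real.exp_log hpos, one_div]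
    -- variation bounds
    have hsumb : ∑ i ∈ Finset.Ioc s n, |β i - β (i-1)| ≤ 1/(12*(N:ℝ)*((kk:ℝ)+1)) := by
      have hpos : 0 < 4*N*(3*kk+2+1) := by
        apply Nat.mul_pos (Nat.mul_pos (by norm_num) hN) (by omega)
      have hcast : (1:ℝ)/((4*N*(3*kk+2+1) - 1 : ℕ) + 1 : ℝ) = 1/(12*(N:ℝ)*((kk:ℝ)+1)) := by
        have h1 : ((4*N*(3*kk+2+1) - 1 : ℕ) : ℝ) = 4*(N:ℝ)*(3*(kk:ℝ)+3) - 1 := by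
          have h0 : (4*N*(3*kk+2+1) - 1) + 1 = 4*N*(3*kk+2+1) :=
            Nat.sub_add_cancel hpos
          have h2 : (((4*N*(3*kk+2+1) - 1) + 1 : ℕ) : ℝ) = 4*(N:ℝ)*(3*(kk:ℝ)+3) := by
            rw [h0]; push_cast; ring
          push_cast at h2 ⊢
          linarith
        rw [h1]; ring_nf
      rw [← hcast]
      refine window_sum (fun i => |β i - β (i-1)|) (fun i => abs_nonneg _) _
        (B (4*N*(3*kk+2+1) - 1)) (hQ4 (4*N*(3*kk+2+1) - 1)) s n ?_ hsn
      rw [hsdef]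
      exact le_max_left _ _
    have hsuml : ∑ i ∈ Finset.Ioc s n, |lam i - lam (i-1)| ≤ 1/(30*(N:ℝ)*((kk:ℝ)+1)) := by
      have hpos : 0 < 10*N*(3*kk+2+1) := by
        apply Nat.mul_pos (Nat.mul_pos (by norm_num) hN) (by omega)
      have hcast : (1:ℝ)/((10*N*(3*kk+2+1) - 1 : ℕ) + 1 : ℝ) = 1/(30*(N:ℝ)*((kk:ℝ)+1)) := by
        have h1 : ((10*N*(3*kk+2+1) - 1 : ℕ) : ℝ) = 10*(N:ℝ)*(3*(kk:ℝ)+3) - 1 := by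
          have h0 : (10*N*(3*kk+2+1) - 1) + 1 = 10*N*(3*kk+2+1) :=
            Nat.sub_add_cancel hpos
          have h2 : (((10*N*(3*kk+2+1) - 1) + 1 : ℕ) : ℝ) = 10*(N:ℝ)*(3*(kk:ℝ)+3) := by
            rw [h0]; push_cast; ring
          push_cast at h2 ⊢
          linarith
        rw [h1]; ring_nf
      rw [← hcast]
      refine window_sum (fun i => |lam i - lam (i-1)|) (fun i => abs_nonneg _) _
        (L (10*N*(3*kk+2+1) - 1)) (hQ6 (10*N*(3*kk+2+1) - 1)) s n ?_ hsn
      rw [hsdef]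
      exact le_max_right _ _
    -- combine
    have hes : ∑ i ∈ Finset.Ioc s n, 6*N*(|β i - β (i-1)| + |lam i - lam (i-1)|)
        ≤ 6*(N:ℝ)*(1/(12*(N:ℝ)*((kk:ℝ)+1))) + 6*(N:ℝ)*(1/(30*(N:ℝ)*((kk:ℝ)+1))) := by
      have hsplit : ∑ i ∈ Finset.Ioc s n, 6*N*(|β i - β (i-1)| + |lam i - lam (i-1)|)
          = 6*(N:ℝ) * (∑ i ∈ Finset.Ioc s n, |β i - β (i-1)|)
            + 6*(N:ℝ) * (∑ i ∈ Finset.Ioc s n, |lam i - lam (i-1)|) := by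
        rw [Finset.mul_sum, Finset.mul_sum, ← Finset.sum_add_distrib]
        exact Finset.sum_congr rfl fun i _ => by ring
      rw [hsplit]
      have hN0 : (0:ℝ) < 6*(N:ℝ) := by linarith
      have := mul_le_mul_of_nonneg_left hsumb (le_of_lt hN0)
      have := mul_le_mul_of_nonneg_left hsuml (le_of_lt hN0)
      linarith
    have hxs2 : ‖x (s+1) - x s‖ ≤ 2*(N:ℝ) := by
      have : ‖x (s+1) - x s‖ = ‖(x (s+1) - p) - (x s - p)‖ := by
        congr 1; abel
      rw [this]
      calc ‖(x (s+1) - p) - (x s - p)‖ ≤ ‖x (s+1) - p‖ + ‖x s - p‖ := norm_sub_le _ _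
        _ ≤ 2*(N:ℝ) := by linarith [hxp (s+1), hxp s]
    have hprodterm : (∏ i ∈ Finset.Ioc s n, β i) * ‖x (s+1) - x s‖
        ≤ 1/(3*((kk:ℝ)+1)) := by
      have h1 : (∏ i ∈ Finset.Ioc s n, β i) * ‖x (s+1) - x s‖
          ≤ (1/(6*(N:ℝ)*((kk:ℝ)+1))) * (2*(N:ℝ)) := by
        apply mul_le_mul hprod hxs2 (norm_nonneg _) (by positivity)
      have h2 : (1/(6*(N:ℝ)*((kk:ℝ)+1))) * (2*(N:ℝ)) = 1/(3*((kk:ℝ)+1)) := by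
        field_simp
        ring
      linarith [h2 ▸ h1]
    have e1 : 6*(N:ℝ)*(1/(12*(N:ℝ)*((kk:ℝ)+1))) = 1/(2*((kk:ℝ)+1)) := by
      field_simp; ring
    have e2 : 6*(N:ℝ)*(1/(30*(N:ℝ)*((kk:ℝ)+1))) = 1/(5*((kk:ℝ)+1)) := by
      field_simp; ring
    have e3 : 1/(3*((kk:ℝ)+1)) + 1/(2*((kk:ℝ)+1)) + 1/(5*((kk:ℝ)+1)) ≤ 3/(2*((kk:ℝ)+1)) := by
      rw [div_add_div _ _ (by positivity) (by positivity), div_add_div _ _ (by positivity) (by positivity)]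
      rw [div_le_div_iff₀ (by positivity) (by positivity)]
      ring_nf
      nlinarith [hkk1]
    rw [e1, e2] at hes
    linarith
    -- asymptotic regularity with rate nu2
  have hAR : ∀ K n : ℕ, nu2 N l b D B L K ≤ n → ‖T (x n) - x n‖ ≤ 3/((K:ℝ)+1) := by
    intro K n hn
    have hK1 : (0:ℝ) < (K:ℝ)+1 := by positivity
    have hlr : (0:ℝ) < l := by linarith
    have hbn := hβ n
    have hln := hlam n
    -- 1 - β n small
    have hQ2pos : 0 < 4*N*l*(K+1) := by
      apply Nat.mul_pos (Nat.mul_pos (Nat.mul_pos (by norm_num) hN) hl) (by omega)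
    have hbsmall : 1 - β n ≤ 1/(4*(N:ℝ)*(l:ℝ)*((K:ℝ)+1)) := by
      have hb : b (4*N*l*(K+1) - 1) ≤ n := le_trans (le_max_left _ _) hn
      have h2 := hQ2 (4*N*l*(K+1) - 1) n hb
      have hcast : ((4*N*l*(K+1) - 1 : ℕ) : ℝ) + 1 = 4*(N:ℝ)*(l:ℝ)*((K:ℝ)+1) := by
        have h0 : (4*N*l*(K+1) - 1) + 1 = 4*N*l*(K+1) := Nat.sub_add_cancel hQ2pos
        have h2' : (((4*N*l*(K+1) - 1) + 1 : ℕ) : ℝ) = 4*(N:ℝ)*(l:ℝ)*((K:ℝ)+1) := by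
          rw [h0]; push_cast; ring
        push_cast at h2' ⊢
        linarith
      rw [hcast] at h2
      calc 1 - β n ≤ |1 - β n| := le_abs_self _
        _ ≤ 1/(4*(N:ℝ)*(l:ℝ)*((K:ℝ)+1)) := h2
    -- difference small
    have hdn : ‖x (n+1) - x n‖ ≤ 3/(4*(l:ℝ)*((K:ℝ)+1)) := by
      have hnu1n : nu1 N D B L (2*l*(K+1) - 1) ≤ n := le_trans (le_max_right _ _) hn
      have h2 := hdx (2*l*(K+1) - 1) n hnu1n
      have hpos : 0 < 2*l*(K+1) := by
        apply Nat.mul_pos (Nat.mul_pos (by norm_num) hl) (by omega)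
      have hcast : ((2*l*(K+1) - 1 : ℕ) : ℝ) + 1 = 2*(l:ℝ)*((K:ℝ)+1) := by
        have h0 : (2*l*(K+1) - 1) + 1 = 2*l*(K+1) := Nat.sub_add_cancel hpos
        have h2' : (((2*l*(K+1) - 1) + 1 : ℕ) : ℝ) = 2*(l:ℝ)*((K:ℝ)+1) := by
          rw [h0]; push_cast; ring
        push_cast at h2' ⊢
        linarith
      rw [hcast] at h2
      calc ‖x (n+1) - x n‖ ≤ 3/(2*(2*(l:ℝ)*((K:ℝ)+1))) := h2
        _ = 3/(4*(l:ℝ)*((K:ℝ)+1)) := by ring_nf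
    -- displacement of u_n
    have hxu : ‖x n - β n • x n‖ ≤ (1 - β n) * (2*(N:ℝ)) := by
      have : x n - β n • x n = (1 - β n) • x n := by module
      rw [this, norm_smul, Real.norm_eq_abs, abs_of_nonneg (by linarith [hbn.2])]
      exact mul_le_mul_of_nonneg_left (hxn n) (by linarith [hbn.2])
    have hTuu : ‖T (β n • x n) - β n • x n‖
        ≤ (l:ℝ) * (‖x (n+1) - x n‖ + (1 - β n) * (2*(N:ℝ))) := by
      have hsm : lam n • (T (β n • x n) - β n • x n) = x (n+1) - β n • x n := by
        rw [hx n]; module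
      have h1 : (1/(l:ℝ)) * ‖T (β n • x n) - β n • x n‖
          ≤ ‖x (n+1) - β n • x n‖ := by
        calc (1/(l:ℝ)) * ‖T (β n • x n) - β n • x n‖
            ≤ lam n * ‖T (β n • x n) - β n • x n‖ :=
              mul_le_mul_of_nonneg_right (hQ5 n) (norm_nonneg _)
          _ = ‖lam n • (T (β n • x n) - β n • x n)‖ := by
              rw [norm_smul, Real.norm_eq_abs, abs_of_pos hln.1]
          _ = ‖x (n+1) - β n • x n‖ := by rw [hsm]
      have h2 : ‖x (n+1) - β n • x n‖ ≤ ‖x (n+1) - x n‖ + (1 - β n) * (2*(N:ℝ)) := by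
        calc ‖x (n+1) - β n • x n‖ = ‖(x (n+1) - x n) + (x n - β n • x n)‖ := by
              congr 1; abel
          _ ≤ ‖x (n+1) - x n‖ + ‖x n - β n • x n‖ := norm_add_le _ _
          _ ≤ ‖x (n+1) - x n‖ + (1 - β n) * (2*(N:ℝ)) := by linarith [hxu]
      have h3 := le_trans h1 h2
      have h4 := mul_le_mul_of_nonneg_left h3 (le_of_lt hlr)
      calc ‖T (β n • x n) - β n • x n‖
          = (l:ℝ) * ((1/(l:ℝ)) * ‖T (β n • x n) - β n • x n‖) := by
            field_simp
        _ ≤ (l:ℝ) * (‖x (n+1) - x n‖ + (1 - β n) * (2*(N:ℝ))) := h4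
    -- assemble
    have htri : ‖T (x n) - x n‖
        ≤ ‖T (x n) - T (β n • x n)‖ + ‖T (β n • x n) - β n • x n‖ + ‖β n • x n - x n‖ := by
      have t1 := dist_triangle (T (x n)) (T (β n • x n)) (x n)
      have t2 := dist_triangle (T (β n • x n)) (β n • x n) (x n)
      simp only [dist_eq_norm] at t1 t2
      linarith
    have h5 : ‖T (x n) - T (β n • x n)‖ ≤ (1 - β n) * (2*(N:ℝ)) := by
      calc ‖T (x n) - T (β n • x n)‖ ≤ ‖x n - β n • x n‖ := hT _ _
        _ ≤ (1 - β n) * (2*(N:ℝ)) := hxu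
    have h6 : ‖β n • x n - x n‖ ≤ (1 - β n) * (2*(N:ℝ)) := by
      rw [norm_sub_rev]; exact hxu
    -- numeric bound
    have hb2N : (1 - β n) * (2*(N:ℝ)) ≤ 1/(2*(l:ℝ)*((K:ℝ)+1)) := by
      have h7 : (1 - β n) * (2*(N:ℝ)) ≤ (1/(4*(N:ℝ)*(l:ℝ)*((K:ℝ)+1))) * (2*(N:ℝ)) := by
        apply mul_le_mul_of_nonneg_right hbsmall (by linarith)
      have h8 : (1/(4*(N:ℝ)*(l:ℝ)*((K:ℝ)+1))) * (2*(N:ℝ)) = 1/(2*(l:ℝ)*((K:ℝ)+1)) := by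
        field_simp
        ring
      linarith
    have h9 : (l:ℝ) * (‖x (n+1) - x n‖ + (1 - β n) * (2*(N:ℝ)))
        ≤ (l:ℝ) * (3/(4*(l:ℝ)*((K:ℝ)+1)) + 1/(2*(l:ℝ)*((K:ℝ)+1))) := by
      apply mul_le_mul_of_nonneg_left _ (le_of_lt hlr)
      linarith
    have h10 : (l:ℝ) * (3/(4*(l:ℝ)*((K:ℝ)+1)) + 1/(2*(l:ℝ)*((K:ℝ)+1))) = 5/(4*((K:ℝ)+1)) := by
      field_simp
      ring
    have h11 : 1/(2*(l:ℝ)*((K:ℝ)+1)) ≤ 1/(2*((K:ℝ)+1)) := by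
      apply div_le_div_of_nonneg_left (by norm_num) (by positivity)
      nlinarith
    have h12 : 1/(2*((K:ℝ)+1)) + 1/(2*((K:ℝ)+1)) + 5/(4*((K:ℝ)+1)) ≤ 3/((K:ℝ)+1) := by
      rw [div_add_div _ _ (by positivity) (by positivity)]
      rw [div_add_div _ _ (by positivity) (by positivity)]
      rw [div_le_div_iff₀ (by positivity) (by positivity)]
      nlinarith
    rw [h10] at h9
    linarith [le_trans hb2N h11, hTuu]
    -- monotonicity of the rate functions
  have hGmono : Monotone (Gfun N B L) := by
    intro i j hij
    exact max_le_max
      (hBmono (Nat.sub_le_sub_right (Nat.mul_le_mul_left _ (by omega)) 1))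
      (hLmono (Nat.sub_le_sub_right (Nat.mul_le_mul_left _ (by omega)) 1))
  have hlogmono : Monotone (fun kk : ℕ => Nat.ceil (Real.log (6 * (N:ℝ) * (kk+1)))) := by
    intro i j hij
    apply Nat.ceil_le_ceil
    apply Real.log_le_log (by positivity)
    have hij' : (i:ℝ) ≤ j := Nat.cast_le.mpr hij
    nlinarith
  have hnu1mono : Monotone (nu1 N D B L) := by
    intro i j hij
    unfold nu1
    apply Nat.add_le_add_right
    exact hDmono (Nat.add_le_add (hGmono (by omega)) (hlogmono hij))
  have hnu2mono : Monotone (nu2 N l b D B L) := by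
    intro i j hij
    unfold nu2
    exact max_le_max
      (hbmono (Nat.sub_le_sub_right (Nat.mul_le_mul_left _ (by omega)) 1))
      (hnu1mono (Nat.sub_le_sub_right (Nat.mul_le_mul_left _ (by omega)) 1))
  -- the iteration of gcheck
  set g : ℕ → ℕ := gcheckKM N l b D B L f with hgdef
  set aa : ℕ → ℕ := fun i => g^[i] 0 with haadef
  set nn : ℕ → ℕ := fun i => nu2 N l b D B L (48*N*(aa i + 1)^2) with hnndef
  have haasucc : ∀ i, aa (i+1) = g (aa i) := by
    intro i
    rw [haadef]
    exact Function.iterate_succ_apply' g i 0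
  have hgge : ∀ m : ℕ, m ≤ g m := by
    intro m
    rw [hgdef]
    have h1 : m ≤ (m+1)^2 := by nlinarith
    have h2 : (m+1)^2 ≤ 48*N*(m+1)^2 := by
      calc (m+1)^2 = 1*(m+1)^2 := (one_mul _).symm
        _ ≤ 48*N*(m+1)^2 := Nat.mul_le_mul_right _ (by omega)
    exact le_trans (le_trans h1 h2) (le_max_right _ _)
  have haamono : Monotone aa :=
    monotone_nat_of_le_succ (fun i => by rw [haasucc i]; exact hgge (aa i))
  have hnnmono : Monotone nn := by
    intro i j hij
    rw [hnndef]
    apply hnu2mono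
    exact Nat.mul_le_mul_left _ (Nat.pow_le_pow_left (by have := haamono hij; omega) 2)
  -- convex hulls of tails
  set SS : ℕ → Set H := fun i => x '' Set.Ici (nn i) with hSSdef
  set CH : ℕ → Set H := fun i => convexHull ℝ (SS i) with hCHdef
  set d : ℕ → ℝ := fun i => sInf ((fun w : H => ‖w‖^2) '' CH i) with hddef
  have hxCH : ∀ i m, nn i ≤ m → x m ∈ CH i := by
    intro i m hm
    rw [hCHdef]
    exact subset_convexHull ℝ _ ⟨m, hm, rfl⟩
  have hSSball : ∀ i, SS i ⊆ Metric.closedBall p N := by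
    intro i
    rw [hSSdef]
    rintro _ ⟨m, _, rfl⟩
    exact Metric.mem_closedBall.mpr (by rw [dist_eq_norm]; exact hxp m)
  have hCHball : ∀ i, CH i ⊆ Metric.closedBall p N := by
    intro i
    rw [hCHdef]
    exact convexHull_min (hSSball i) (convex_closedBall _ _)
  have hCHmono : ∀ i j, i ≤ j → CH j ⊆ CH i := by
    intro i j hij
    rw [hCHdef]
    exact convexHull_mono (Set.image_mono (Set.Ici_subset_Ici.mpr (hnnmono hij)))
  have hdne : ∀ i, ((fun w : H => ‖w‖^2) '' CH i).Nonempty :=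
    fun i => ⟨_, ⟨x (nn i), hxCH i (nn i) le_rfl, rfl⟩⟩
  have hdbdd : ∀ i, BddBelow ((fun w : H => ‖w‖^2) '' CH i) := by
    intro i
    refine ⟨0, ?_⟩
    rintro r ⟨w, _, rfl⟩
    positivity
  have hdle : ∀ i, ∀ w ∈ CH i, d i ≤ ‖w‖^2 := by
    intro i w hw
    rw [hddef]
    exact csInf_le (hdbdd i) ⟨w, hw, rfl⟩
  have hd0 : ∀ i, 0 ≤ d i := by
    intro i
    rw [hddef]
    apply le_csInf (hdne i)
    rintro r ⟨w, _, rfl⟩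
    positivity
  have hd4N : ∀ i, d i ≤ 4*(N:ℝ)^2 := by
    intro i
    have h1 := hdle i (x (nn i)) (hxCH i (nn i) le_rfl)
    have h2 := hxn (nn i)
    nlinarith [norm_nonneg (x (nn i))]
  -- pigeonhole
  set q : ℝ := 1/(8*(N:ℝ)^2*((k:ℝ)+1)^2) with hqdef
  have hq0 : 0 < q := by rw [hqdef]; positivity
  have hpig : ∃ i, i < 64*N^4*(k+1)^2 ∧ d (i+1) ≤ d i + q := by
    by_contra hcon
    push_neg at hcon
    have hgrow : ∀ i, i ≤ 64*N^4*(k+1)^2 → (i:ℝ)*q ≤ d i := by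
      intro i
      induction i with
      | zero => intro _; simpa using hd0 0
      | succ i ih =>
        intro hi
        have h1 := ih (by omega)
        have h2 := hcon i (by omega)
        push_cast
        linarith
    have hR := hgrow _ le_rfl
    have hcast : ((64*N^4*(k+1)^2 : ℕ) : ℝ) = 64*(N:ℝ)^4*((k:ℝ)+1)^2 := by push_cast; ring
    rw [hcast] at hR
    have hq : 64*(N:ℝ)^4*((k:ℝ)+1)^2 * q = 8*(N:ℝ)^2 := by
      rw [hqdef]; field_simp; ring
    have h4 := hd4N (64*N^4*(k+1)^2)
    nlinarith
  obtain ⟨i, hiR, hdrop⟩ := hpig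
  -- the approximate minimizer
  have hlt : d (i+1) < d (i+1) + q := by linarith
  have hlt' : sInf ((fun w : H => ‖w‖^2) '' CH (i+1)) < d (i+1) + q := by
    have hdd : d (i+1) = sInf ((fun w : H => ‖w‖^2) '' CH (i+1)) := by simp only [hddef]
    rw [← hdd]; exact hlt
  obtain ⟨r, hrmem, hrlt⟩ := (csInf_lt_iff (hdbdd (i+1)) (hdne (i+1))).mp hlt'
  obtain ⟨y, hyCH, hyr⟩ := hrmem
  have hupy : ‖y‖^2 < d (i+1) + q := by
    have : ‖y‖^2 = r := hyr
    rw [this]; exact hrlt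
  refine ⟨nn i, ?_, y, ?_, ?_, ?_⟩
  · -- nn i ≤ psiKM
    have hpsi : nn (64*N^4*(k+1)^2) = psiKM N l b D B L k f := by
      rw [hnndef, haadef, hgdef]
      rfl
    rw [← hpsi]
    exact hnnmono (le_of_lt hiR)
  · -- y in the ball of radius 2N
    have h1 := hCHball (i+1) hyCH
    rw [Metric.mem_closedBall, dist_eq_norm] at h1
    linarith
  · -- approximate fixed point
    have hfix : ∀ z ∈ SS (i+1), ‖T z - z‖ ≤ 3/(((48*N*(aa (i+1) + 1)^2 : ℕ) : ℝ)+1) := by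
      rw [hSSdef]
      rintro _ ⟨m, hm, rfl⟩
      apply hAR
      rw [hnndef] at hm
      exact hm
    have hsq : ‖T y - y‖^2
        ≤ 4*(N:ℝ)*(3/(((48*N*(aa (i+1) + 1)^2 : ℕ) : ℝ)+1))
          + (3/(((48*N*(aa (i+1) + 1)^2 : ℕ) : ℝ)+1))^2 := by
      apply hull_approx_fixed T hT (SS (i+1)) p N _ (by positivity) (by linarith)
        hfix (hSSball (i+1)) y
      rw [hCHdef] at hyCH
      exact hyCH
    set A : ℝ := ((aa (i+1) : ℕ) : ℝ) with hAdef
    have hA0 : 0 ≤ A := by rw [hAdef]; positivity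
    have hMcast : ((48*N*(aa (i+1) + 1)^2 : ℕ) : ℝ) = 48*(N:ℝ)*(A+1)^2 := by
      rw [hAdef]; push_cast; ring
    rw [hMcast] at hsq
    set ε : ℝ := 3/(48*(N:ℝ)*(A+1)^2+1) with hεdef
    have hMpos : (0:ℝ) < 48*(N:ℝ)*(A+1)^2 := by positivity
    have hεle : ε ≤ 1/(16*(N:ℝ)*(A+1)^2) := by
      rw [hεdef]
      have h1 : 3/(48*(N:ℝ)*(A+1)^2+1) ≤ 3/(48*(N:ℝ)*(A+1)^2) :=
        div_le_div_of_nonneg_left (by norm_num) hMpos (by linarith)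
      have h2 : 3/(48*(N:ℝ)*(A+1)^2) = 1/(16*(N:ℝ)*(A+1)^2) := by
        field_simp
        ring
      linarith
    have hε0 : 0 ≤ ε := by rw [hεdef]; positivity
    have hε1 : ε ≤ 1 := by
      rw [hεdef, div_le_one (by linarith)]
      nlinarith
    have he1 : 4*(N:ℝ)*ε ≤ 1/(4*(A+1)^2) := by
      have h1 : 4*(N:ℝ)*ε ≤ 4*(N:ℝ)*(1/(16*(N:ℝ)*(A+1)^2)) :=
        mul_le_mul_of_nonneg_left hεle (by linarith)
      have h2 : 4*(N:ℝ)*(1/(16*(N:ℝ)*(A+1)^2)) = 1/(4*(A+1)^2) := by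
        field_simp; ring
      linarith
    have he2 : ε^2 ≤ 1/(16*(A+1)^2) := by
      have h1 : ε^2 ≤ ε := by nlinarith
      have h2 : 1/(16*(N:ℝ)*(A+1)^2) ≤ 1/(16*(A+1)^2) := by
        apply div_le_div_of_nonneg_left (by norm_num) (by positivity)
        nlinarith
      linarith
    have hsq2 : ‖T y - y‖^2 ≤ (1/(A+1))^2 := by
      have hP : (0:ℝ) < (A+1)^2 := by positivity
      have h3 : (1/(A+1))^2 = 1/(A+1)^2 := by rw [div_pow]; norm_num
      rw [h3]
      have h4 : 1/(4*(A+1)^2) + 1/(16*(A+1)^2) ≤ 1/(A+1)^2 := by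
        rw [div_add_div _ _ (by positivity) (by positivity), div_le_div_iff₀ (by positivity) hP]
        ring_nf
        nlinarith
      calc ‖T y - y‖^2 ≤ 4*(N:ℝ)*ε + ε^2 := by rw [hεdef] at *; exact hsq
        _ ≤ 1/(4*(A+1)^2) + 1/(16*(A+1)^2) := by linarith
        _ ≤ 1/(A+1)^2 := h4
    have hTy : ‖T y - y‖ ≤ 1/(A+1) := by
      have h1 : ‖T y - y‖ = Real.sqrt (‖T y - y‖^2) := (Real.sqrt_sq (norm_nonneg _)).symm
      have h2 : Real.sqrt (‖T y - y‖^2) ≤ Real.sqrt ((1/(A+1))^2) := Real.sqrt_le_sqrt hsq2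
      have h3 : Real.sqrt ((1/(A+1))^2) = 1/(A+1) := Real.sqrt_sq (by positivity)
      rw [h1]; rw [h3] at h2; exact h2
    have hfA : f (nn i) ≤ aa (i+1) := by
      rw [haasucc i, hgdef]
      have : f (nu2 N l b D B L (48*N*(aa i + 1)^2)) ≤ gcheckKM N l b D B L f (aa i) :=
        le_max_left _ _
      rw [hnndef]
      exact this
    have hfA' : ((f (nn i) : ℕ) : ℝ) + 1 ≤ A + 1 := by
      rw [hAdef]
      have : ((f (nn i):ℕ):ℝ) ≤ ((aa (i+1):ℕ):ℝ) := Nat.cast_le.mpr hfA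
      linarith
    calc ‖T y - y‖ ≤ 1/(A+1) := hTy
      _ ≤ 1/(((f (nn i) : ℕ) : ℝ) + 1) := by
          apply div_le_div_of_nonneg_left (by norm_num) (by positivity) hfA'
  · -- the variational inequality
    intro m hm
    have hzCH : x m ∈ CH i := hxCH i m hm
    have hyCHi : y ∈ CH i := hCHmono i (i+1) (Nat.le_succ i) hyCH
    set t : ℝ := 1/(4*(N:ℝ)^2*((k:ℝ)+1)) with htdef
    have ht0 : (0:ℝ) < t := by rw [htdef]; positivity
    have ht1 : t ≤ 1 := by
      rw [htdef, div_le_one (by positivity)]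
      nlinarith
    have hcomb : (1-t) • y + t • x m ∈ CH i := by
      rw [hCHdef]
      rw [hCHdef] at hyCHi hzCH
      exact (convex_convexHull ℝ (SS i)) hyCHi hzCH (by linarith) (le_of_lt ht0) (by ring)
    have hlow : d i ≤ ‖(1-t) • y + t • x m‖^2 := hdle i _ hcomb
    have hid : (1-t) • y + t • x m = y + t • (x m - y) := by module
    have hexp : ‖y + t • (x m - y)‖^2
        = ‖y‖^2 + 2*(t*(inner ℝ y (x m - y) : ℝ)) + t^2*‖x m - y‖^2 := by
      rw [@norm_add_sq_real, real_inner_smul_right, norm_smul, Real.norm_eq_abs,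
        abs_of_pos ht0]
      ring
    rw [hid, hexp] at hlow
    have hinner : (inner ℝ y (x m - y) : ℝ) = -(inner ℝ y (y - x m) : ℝ) := by
      rw [← inner_neg_right]
      congr 1
      abel
    rw [hinner] at hlow
    have hzy : ‖x m - y‖ ≤ 2*(N:ℝ) := by
      have h1 : dist (x m) p ≤ N := by rw [dist_eq_norm]; exact hxp m
      have h2 : dist y p ≤ N := hCHball (i+1) hyCH
      have h3 := dist_triangle (x m) p y
      have h4 : dist p y = dist y p := dist_comm _ _
      have h5 : dist (x m) y ≤ 2*(N:ℝ) := by linarith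
      rw [dist_eq_norm] at h5
      exact h5
    have hZ : ‖x m - y‖^2 ≤ 4*(N:ℝ)^2 := by nlinarith [norm_nonneg (x m - y)]
    have hmain2 : 2*t*(inner ℝ y (y - x m) : ℝ) ≤ 2*q + t^2*(4*(N:ℝ)^2) := by
      have h6 : t^2*‖x m - y‖^2 ≤ t^2*(4*(N:ℝ)^2) :=
        mul_le_mul_of_nonneg_left hZ (sq_nonneg t)
      linarith
    have heq : 2*q + t^2*(4*(N:ℝ)^2) = 2*t*(1/((k:ℝ)+1)) := by
      rw [htdef, hqdef]
      field_simp
      ring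
    rw [heq] at hmain2
    exact le_of_mul_le_mul_left hmain2 (by positivity)
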